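/- Let n be a natural number, G a group, and ρ : G →* (V ≃ₗ[ℂ] V) a linear action of G on V = (Fin n → ℂ). Let r be a natural number, and for each j ∈ Fin r let fⱼ ∈ MvPolynomial (Fin n) ℂ and χⱼ : G → ℂˣ satisfy fⱼ(ρ(g)v) = χⱼ(g)·fⱼ(v) for all g, v. Fix i ∈ Fin r and a point v* ∈ V with fᵢ(v*) = 0 and fⱼ(v*) ≠ 0 for every j ≠ i. Then: (1) for every j ≠ i and every g ∈ G with ρ(g)v* = v*, χⱼ(g) = 1; (2) if k : Fin r → ℕ with kᵢ = 0, and h₁ ∈ MvPolynomial (Fin n) ℂ and Φ : G → ℂ satisfy h₁(ρ(g)v) = (∏ⱼ χⱼ(g)^{kⱼ})·((∏ⱼ fⱼ(v)^{kⱼ})·Φ(g) + h₁(v)) for all g ∈ G, v ∈ V, then Φ(g) = 0 for every g ∈ G with ρ(g)v* = v*. -/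

import Mathlib

open MvPolynomial

/-- At a generic point `v*` of the hypersurface component `fᵢ = 0` (so `fⱼ(v*) ≠ 0` for
`j ≠ i`): (1) the stabilizer of `v*` lies in `ker χⱼ` for all `j ≠ i`; (2) if `kᵢ = 0`
in an additive relative invariant `h₁ / ∏ⱼ fⱼ^{kⱼ}` with additive function `Φ`, then the
stabilizer of `v*` lies in `ker Φ`. -/
theorem vanishing_at_generic_point_of_component
    (n : ℕ) {G : Type*} [Group G]
    (ρ : G →* ((Fin n → ℂ) ≃ₗ[ℂ] (Fin n → ℂ)))
    (r : ℕ) (f : Fin r → MvPolynomial (Fin n) ℂ) (χ : Fin r → G → ℂˣ)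
    (hrel : ∀ j (g : G) (v : Fin n → ℂ),
      eval (ρ g v) (f j) = (χ j g : ℂ) * eval v (f j))
    (i : Fin r) (vstar : Fin n → ℂ)
    (hvi : eval vstar (f i) = 0)
    (hvj : ∀ j, j ≠ i → eval vstar (f j) ≠ 0) :
    (∀ j, j ≠ i → ∀ g : G, ρ g vstar = vstar → χ j g = 1) ∧
    (∀ (k : Fin r → ℕ), k i = 0 →
      ∀ (h₁ : MvPolynomial (Fin n) ℂ) (Φ : G → ℂ),
      (∀ (g : G) (v : Fin n → ℂ),
        eval (ρ g v) h₁ =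
          (∏ j, ((χ j g : ℂ)) ^ (k j)) *
            ((∏ j, (eval v (f j)) ^ (k j)) * Φ g + eval v h₁)) →
      ∀ g : G, ρ g vstar = vstar → Φ g = 0) := by
  have h1 : ∀ j, j ≠ i → ∀ g : G, ρ g vstar = vstar → χ j g = 1 := by
    intro j hj g hg
    have := hrel j g vstar
    rw [hg] at this
    have hx : (χ j g : ℂ) = 1 :=
      mul_right_cancel₀ (hvj j hj) (this.symm.trans (one_mul _).symm)
    exact Units.ext hx
  refine ⟨h1, ?_⟩
  intro k hk h₁ Φ hrel2 g hg
  have hχ : (∏ j, ((χ j g : ℂ)) ^ (k j)) = 1 := by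
    apply Finset.prod_eq_one
    intro j _
    by_cases hji : j = i
    · rw [hji, hk, pow_zero]
    · rw [h1 j hji g hg]; simp
  have hf : (∏ j, (eval vstar (f j)) ^ (k j)) ≠ 0 := by
    apply Finset.prod_ne_zero_iff.2
    intro j _
    by_cases hji : j = i
    · rw [hji, hk, pow_zero]; exact one_ne_zero
    · exact pow_ne_zero _ (hvj j hji)
  have := hrel2 g vstar
  rw [hg, hχ, one_mul] at this
  have h0 : (∏ j, (eval vstar (f j)) ^ (k j)) * Φ g = 0 := right_eq_add.mp this
  exact (mul_eq_zero.mp h0).resolve_left hf
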